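/- Let λ ∈ ℝ and let Q : ℝ → ℂ be such that Q is differentiable on ℝ, deriv Q is differentiable on ℝ, and −deriv (deriv Q) x − (|Q(x)|²)·Q(x) = λ·Q(x) for every x ∈ ℝ. Assume moreover that Q(x) → 0 and deriv Q (x) → 0 as x → +∞ (limits along Filter.atTop), and that Q(x₀) ≠ 0 for some x₀ ∈ ℝ. Then λ < 0. -/

import Mathlib

open Filter

/-- The Lagrange multiplier of a nontrivial decaying solution of
`−Q'' − |Q|²Q = λQ` is negative. -/
theorem lagrange_multiplier_neg (lam : ℝ) (Q : ℝ → ℂ)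
    (hQ : Differentiable ℝ Q) (hQ' : Differentiable ℝ (deriv Q))
    (heq : ∀ x : ℝ, -deriv (deriv Q) x - ((‖Q x‖ ^ 2 : ℝ) : ℂ) * Q x = (lam : ℂ) * Q x)
    (hQlim : Tendsto Q atTop (nhds 0))
    (hQ'lim : Tendsto (deriv Q) atTop (nhds 0))
    (hne : ∃ x₀ : ℝ, Q x₀ ≠ 0) :
    lam < 0 := by
  obtain ⟨x₀, hx₀⟩ := hne
  set E : ℝ → ℝ := fun x => ‖deriv Q x‖ ^ 2 + (‖Q x‖ ^ 2) ^ 2 / 2 + lam * ‖Q x‖ ^ 2 with hE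
  have hD : ∀ x : ℝ, HasDerivAt E 0 x := by
    intro x
    have h1 : HasDerivAt Q (deriv Q x) x := (hQ x).hasDerivAt
    have h2 : HasDerivAt (deriv Q) (deriv (deriv Q) x) x := (hQ' x).hasDerivAt
    have hq2 : HasDerivAt (fun y => ‖Q y‖ ^ 2)
        (2 * (inner ℝ (Q x) (deriv Q x) : ℝ)) x := h1.norm_sq
    have hq1 : HasDerivAt (fun y => ‖deriv Q y‖ ^ 2)
        (2 * (inner ℝ (deriv Q x) (deriv (deriv Q) x) : ℝ)) x := h2.norm_sq
    -- second derivative from the equation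
    have hQ'' : deriv (deriv Q) x = ((-(‖Q x‖ ^ 2 + lam) : ℝ) : ℂ) * Q x := by
      have := heq x
      push_cast at this ⊢
      linear_combination -this
    have hkey : (inner ℝ (deriv Q x) (deriv (deriv Q) x) : ℝ)
        = -(‖Q x‖ ^ 2 + lam) * (inner ℝ (Q x) (deriv Q x) : ℝ) := by
      rw [hQ'']
      rw [← Complex.real_smul, real_inner_smul_right, real_inner_comm]
    have := (hq1.add ((hq2.pow 2).div_const 2)).add (hq2.const_mul lam)
    convert this using 1
    case e'_4 => rfl
    case e'_5 => rfl
    case e'_8 => rfl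
    rw [hkey]; ring
  have hconst : ∀ x : ℝ, E x = E x₀ := fun x =>
    is_const_of_deriv_eq_zero (fun y => (hD y).differentiableAt)
      (fun y => (hD y).deriv) x x₀
  have hlim : Tendsto E atTop (nhds 0) := by
    have h1 := hQ'lim.norm.pow 2
    have h2 := hQlim.norm.pow 2
    have : Tendsto E atTop
        (nhds (‖(0:ℂ)‖ ^ 2 + (‖(0:ℂ)‖ ^ 2) ^ 2 / 2 + lam * ‖(0:ℂ)‖ ^ 2)) :=
      (h1.add ((h2.pow 2).div_const 2)).add (h2.const_mul lam)
    simpa using this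
  have hlim' : Tendsto E atTop (nhds (E x₀)) := by
    have : E = fun _ => E x₀ := funext hconst
    rw [this]; exact tendsto_const_nhds
  have hE0' : ‖deriv Q x₀‖ ^ 2 + (‖Q x₀‖ ^ 2) ^ 2 / 2 + lam * ‖Q x₀‖ ^ 2 = 0 :=
    tendsto_nhds_unique hlim' hlim
  have hp : 0 < ‖Q x₀‖ ^ 2 := pow_pos (norm_pos_iff.mpr hx₀) 2
  nlinarith [sq_nonneg (‖deriv Q x₀‖), hp, sq_nonneg (‖Q x₀‖ ^ 2)]
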